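/- (Galois) If a quadratic irrational has the purely periodic continued fraction expansion α = [\overline{b₁, …, b_l}] (bⱼ ≥ 1 integers, the block repeating forever), then its conjugate is ᾱ = −[0; \overline{b_l, b_{l−1}, …, b₁}] = −1/[\overline{b_l, b_{l−1}, …, b₁}], the period being reversed. -/

import Mathlib

open Filter

noncomputable section

/-- Continued fraction numerators: `cfNum c (n+1) = pₙ` with `p₋₁ = 1`, `p₀ = c 0`,
`pₙ = cₙ pₙ₋₁ + pₙ₋₂`. -/
def cfNum (c : ℕ → ℤ) : ℕ → ℤ
  | 0 => 1
  | 1 => c 0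
  | n + 2 => c (n + 1) * cfNum c (n + 1) + cfNum c n

/-- Continued fraction denominators: `cfDen c (n+1) = qₙ` with `q₋₁ = 0`, `q₀ = 1`,
`qₙ = cₙ qₙ₋₁ + qₙ₋₂`. -/
def cfDen (c : ℕ → ℤ) : ℕ → ℤ
  | 0 => 0
  | 1 => 1
  | n + 2 => c (n + 1) * cfDen c (n + 1) + cfDen c n

/-- The `n`-th convergent `pₙ/qₙ` of the continued fraction with partial quotients `c`. -/
def cfConv (c : ℕ → ℤ) (n : ℕ) : ℝ := (cfNum c (n + 1) : ℝ) / (cfDen c (n + 1) : ℝ)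

/-- The Gauss map iterates of `α`. -/
def cfXi (α : ℝ) : ℕ → ℝ
  | 0 => α
  | n + 1 => 1 / Int.fract (cfXi α n)

/-- The `n`-th partial quotient of `α`. -/
def cfA (α : ℝ) (n : ℕ) : ℤ := ⌊cfXi α n⌋


section General
variable {c : ℕ → ℤ}

lemma cfDen_nonneg (hc1 : ∀ n, 1 ≤ c (n+1)) : ∀ n, 0 ≤ cfDen c n
  | 0 => le_refl _
  | 1 => zero_le_one
  | (n+2) => by
      have h1 := cfDen_nonneg hc1 n
      have h2 := cfDen_nonneg hc1 (n+1)
      have := hc1 n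
      simp only [cfDen]
      nlinarith

lemma cfDen_pos (hc1 : ∀ n, 1 ≤ c (n+1)) : ∀ n, 1 ≤ cfDen c (n+1)
  | 0 => le_refl _
  | (n+1) => by
      have h1 := cfDen_nonneg hc1 n
      have h2 := cfDen_pos hc1 n
      have := hc1 n
      simp only [cfDen]
      nlinarith

lemma cfDen_ge (hc1 : ∀ n, 1 ≤ c (n+1)) : ∀ n : ℕ, (n : ℤ) ≤ cfDen c (n+1)
  | 0 => by simp [cfDen]
  | 1 => by simpa [cfDen] using hc1 0
  | (n+2) => by
      have h1 := cfDen_ge hc1 (n+1)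
      have h2 := cfDen_pos hc1 n
      have h3 := cfDen_pos hc1 (n+1)
      have := hc1 (n+1)
      show ((n+2 : ℕ) : ℤ) ≤ c (n+2) * cfDen c (n+2) + cfDen c (n+1)
      simp only [show n+1+1 = n+2 from rfl] at h1 h3
      push_cast at h1 ⊢
      nlinarith

lemma cfNum_pos (hc0 : ∀ n, 1 ≤ c n) : ∀ n, 1 ≤ cfNum c n
  | 0 => le_refl _
  | 1 => hc0 0
  | (n+2) => by
      have h1 := cfNum_pos hc0 n
      have h2 := cfNum_pos hc0 (n+1)
      have := hc0 (n+1)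
      simp only [cfNum]
      nlinarith

lemma cfNum_ge_den (hc0 : ∀ n, 1 ≤ c n) : ∀ n, cfDen c n ≤ cfNum c n
  | 0 => by simp [cfDen, cfNum]
  | 1 => by simpa [cfDen, cfNum] using hc0 0
  | (n+2) => by
      have h1 := cfNum_ge_den hc0 n
      have h2 := cfNum_ge_den hc0 (n+1)
      have := hc0 (n+1)
      have h3 : (0:ℤ) ≤ cfDen c (n+1) := cfDen_nonneg (fun n => hc0 (n+1)) _
      simp only [cfNum, cfDen]
      nlinarith

lemma cfDet : ∀ n, cfNum c (n+1) * cfDen c n - cfNum c n * cfDen c (n+1) = (-1)^(n+1)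
  | 0 => by simp [cfNum, cfDen]
  | (n+1) => by
      have h := cfDet n
      show (c (n+1) * cfNum c (n+1) + cfNum c n) * cfDen c (n+1)
          - cfNum c (n+1) * (c (n+1) * cfDen c (n+1) + cfDen c n) = (-1)^(n+2)
      have e : (-1:ℤ)^(n+2) = -((-1)^(n+1)) := by ring
      rw [e, ← h]; ring

end General

section General2
variable {c : ℕ → ℤ}

lemma cfDen_mono (hc1 : ∀ n, 1 ≤ c (n+1)) : Monotone (fun n => cfDen c (n+1)) := by
  apply monotone_nat_of_le_succ
  intro n
  have h1 := cfDen_nonneg hc1 n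
  have h2 := cfDen_pos hc1 n
  have := hc1 n
  show cfDen c (n+1) ≤ c (n+1) * cfDen c (n+1) + cfDen c n
  nlinarith

lemma cfDenR_pos (hc1 : ∀ n, 1 ≤ c (n+1)) (n : ℕ) : (0:ℝ) < (cfDen c (n+1) : ℝ) := by
  exact_mod_cast lt_of_lt_of_le zero_lt_one (cfDen_pos hc1 n)

lemma cfConv_sub (hc1 : ∀ n, 1 ≤ c (n+1)) (n : ℕ) :
    cfConv c (n+1) - cfConv c n = (-1)^n / ((cfDen c (n+1) : ℝ) * (cfDen c (n+2) : ℝ)) := by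
  have h1 := cfDenR_pos hc1 n
  have h2 := cfDenR_pos hc1 (n+1)
  have hd := cfDet (c := c) (n+1)
  have hd' : ((cfNum c (n+2) : ℝ) * cfDen c (n+1) - cfNum c (n+1) * cfDen c (n+2)) = (-1)^(n+2) := by
    exact_mod_cast congrArg (Int.cast : ℤ → ℝ) hd
  unfold cfConv
  simp only [show n+1+1 = n+2 from rfl] at h2 ⊢
  rw [div_sub_div _ _ (ne_of_gt h2) (ne_of_gt h1), div_eq_div_iff (by positivity) (by positivity)]
  linear_combination ((cfDen c (n+1):ℝ) * (cfDen c (n+2):ℝ)) * hd'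

lemma cfConv_cauchy_bound (hc1 : ∀ n, 1 ≤ c (n+1)) :
    ∀ n m : ℕ, 1 ≤ n → n ≤ m →
      |cfConv c m - cfConv c n| ≤ 1/(cfDen c (n+1):ℝ) - 1/(cfDen c (m+1):ℝ) := by
  intro n m hn hm
  induction m, hm using Nat.le_induction with
  | base => simp
  | succ m hm ih =>
    have h1 := cfDenR_pos hc1 m
    have h2 := cfDenR_pos hc1 (m+1)
    simp only [show m+1+1 = m+2 from rfl] at h2 ⊢
    have hstep : |cfConv c (m+1) - cfConv c m| = 1/((cfDen c (m+1):ℝ) * (cfDen c (m+2):ℝ)) := by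
      rw [cfConv_sub hc1 m, abs_div, abs_pow, abs_neg, abs_one, one_pow]
      rw [abs_of_pos (by positivity)]
    have hQ : (cfDen c (m+1):ℝ) + 1 ≤ (cfDen c (m+2):ℝ) := by
      have hmn : 1 ≤ m := le_trans hn hm
      have e : 1 ≤ cfDen c m := by
        rcases Nat.exists_eq_add_of_le' hmn with ⟨k, rfl⟩
        exact cfDen_pos hc1 k
      have := hc1 m
      have h3 := cfDen_pos hc1 m
      have h4 : cfDen c (m+1) + 1 ≤ c (m+1) * cfDen c (m+1) + cfDen c m := by nlinarith
      exact_mod_cast h4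
    have key : 1/((cfDen c (m+1):ℝ) * (cfDen c (m+2):ℝ)) ≤ 1/(cfDen c (m+1):ℝ) - 1/(cfDen c (m+2):ℝ) := by
      rw [div_sub_div _ _ (ne_of_gt h1) (ne_of_gt h2), div_le_div_iff₀ (by positivity) (by positivity)]
      nlinarith [mul_pos h1 h2]
    calc |cfConv c (m+1) - cfConv c n|
        ≤ |cfConv c (m+1) - cfConv c m| + |cfConv c m - cfConv c n| := by
          have := abs_sub_abs_le_abs_sub (cfConv c (m+1)) (cfConv c m)
          calc |cfConv c (m+1) - cfConv c n| = |(cfConv c (m+1) - cfConv c m) + (cfConv c m - cfConv c n)| := by ring_nf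
            _ ≤ _ := abs_add_le _ _
      _ ≤ 1/((cfDen c (m+1):ℝ) * (cfDen c (m+2):ℝ)) + (1/(cfDen c (n+1):ℝ) - 1/(cfDen c (m+1):ℝ)) := by
          rw [hstep]; linarith [ih]
      _ ≤ 1/(cfDen c (n+1):ℝ) - 1/(cfDen c (m+2):ℝ) := by linarith
  
end General2

section General3
variable {c : ℕ → ℤ}

lemma cfDen_inv_tendsto (hc1 : ∀ n, 1 ≤ c (n+1)) :
    Tendsto (fun n => ((cfDen c (n+1):ℝ))⁻¹) atTop (nhds 0) := by
  apply Tendsto.inv_tendsto_atTop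
  apply tendsto_atTop_mono (fun n => ?_) tendsto_natCast_atTop_atTop
  exact_mod_cast cfDen_ge hc1 n

lemma cfConv_exists_lim (hc1 : ∀ n, 1 ≤ c (n+1)) :
    ∃ β : ℝ, Tendsto (cfConv c) atTop (nhds β) := by
  have hC : CauchySeq (fun n => cfConv c (n+1)) := by
    apply cauchySeq_of_le_tendsto_0 (fun N => (cfDen c (N+2):ℝ)⁻¹)
    · intro n m N hn hm
      have key : ∀ i j : ℕ, N ≤ i → i ≤ j →
          dist (cfConv c (i+1)) (cfConv c (j+1)) ≤ (cfDen c (N+2):ℝ)⁻¹ := by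
        intro i j hi hij
        rw [dist_comm, Real.dist_eq]
        have h := cfConv_cauchy_bound hc1 (i+1) (j+1) (Nat.le_add_left 1 i) (by omega)
        have hmono : (cfDen c (N+2):ℝ) ≤ (cfDen c (i+2):ℝ) := by
          exact_mod_cast cfDen_mono hc1 (by omega : N+1 ≤ i+1)
        have hN2 := cfDenR_pos hc1 (N+1)
        have hi2 := cfDenR_pos hc1 (i+1)
        have hj2 := cfDenR_pos hc1 (j+1)
        calc |cfConv c (j+1) - cfConv c (i+1)| ≤ 1/(cfDen c (i+2):ℝ) - 1/(cfDen c (j+2):ℝ) := h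
          _ ≤ 1/(cfDen c (i+2):ℝ) := by
                have hj3 := cfDenR_pos hc1 (j+1)
                have : (0:ℝ) < 1/(cfDen c (j+2):ℝ) := by positivity
                linarith
          _ ≤ (cfDen c (N+2):ℝ)⁻¹ := by
                rw [one_div]
                exact inv_anti₀ hN2 hmono
      rcases le_total n m with h | h
      · exact key n m hn h
      · rw [dist_comm]; exact key m n hm h
    · exact (cfDen_inv_tendsto hc1).comp (tendsto_add_atTop_nat 1)
  rcases cauchySeq_tendsto_of_complete hC with ⟨β, hβ⟩
  exact ⟨β, (tendsto_add_atTop_iff_nat 1).mp hβ⟩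

lemma cfConv_ge_one (hc0 : ∀ n, 1 ≤ c n) (n : ℕ) : (1:ℝ) ≤ cfConv c n := by
  have hc1 : ∀ n, 1 ≤ c (n+1) := fun n => hc0 (n+1)
  have h1 := cfDenR_pos hc1 n
  rw [cfConv, le_div_iff₀ h1, one_mul]
  exact_mod_cast cfNum_ge_den hc0 (n+1)

end General3

lemma cfXi_irrational {x : ℝ} (hx : Irrational x) : ∀ n, Irrational (cfXi x n)
  | 0 => hx
  | (n+1) => by
    have h := cfXi_irrational hx n
    have hf : Irrational (Int.fract (cfXi x n)) := by
      rw [Int.fract]; exact h.sub_intCast _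
    rw [cfXi, one_div]
    exact hf.inv

lemma cfXi_fract_pos {x : ℝ} (hx : Irrational x) (n : ℕ) : 0 < Int.fract (cfXi x n) :=
  lt_of_le_of_ne (Int.fract_nonneg _) (by
    intro h
    have hf : Irrational (Int.fract (cfXi x n)) := by
      rw [Int.fract]; exact (cfXi_irrational hx n).sub_intCast _
    exact hf.ne_int 0 (by simp [← h]))

lemma cfXi_gt_one {x : ℝ} (hx : Irrational x) (n : ℕ) : 1 < cfXi x (n+1) := by
  have h1 := cfXi_fract_pos hx n
  have h2 := Int.fract_lt_one (cfXi x n)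
  rw [cfXi, one_lt_div h1]
  exact h2

lemma cfA_pos' {x : ℝ} (hx : Irrational x) (n : ℕ) : 1 ≤ cfA x (n+1) := by
  have := cfXi_gt_one hx n
  rw [cfA]
  exact Int.le_floor.2 (by exact_mod_cast this.le)

lemma cfXi_succ_eq {x : ℝ} (hx : Irrational x) (n : ℕ) :
    cfXi x n = (cfA x n : ℝ) + 1 / cfXi x (n+1) := by
  have hf := cfXi_fract_pos hx n
  rw [cfXi, cfA, one_div, one_div, inv_inv, Int.fract]
  ring

lemma cfXi_identity {x : ℝ} (hx : Irrational x) : ∀ n,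
    x * ((cfDen (cfA x) (n+1) : ℝ) * cfXi x (n+1) + (cfDen (cfA x) n : ℝ))
      = (cfNum (cfA x) (n+1) : ℝ) * cfXi x (n+1) + (cfNum (cfA x) n : ℝ)
  | 0 => by
    have hf := cfXi_fract_pos hx 0
    show x * ((1:ℤ) * cfXi x 1 + ((0:ℤ):ℝ)) = ((cfA x 0 : ℝ)) * cfXi x 1 + ((1:ℤ):ℝ)
    have h1 : cfXi x 1 = 1 / Int.fract (cfXi x 0) := rfl
    have h2 : Int.fract (cfXi x 0) = x - (cfA x 0 : ℝ) := by
      rw [Int.fract]; rfl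
    have hne : x - (cfA x 0 : ℝ) ≠ 0 := by rw [← h2]; exact ne_of_gt hf
    rw [h1, h2]
    push_cast
    field_simp
    ring
  | (n+1) => by
    have ih := cfXi_identity hx n
    have hrec := cfXi_succ_eq hx (n+1)
    have hpos : (0:ℝ) < cfXi x (n+2) := lt_trans zero_lt_one (cfXi_gt_one hx (n+1))
    have hP : (cfNum (cfA x) (n+2) : ℝ) = (cfA x (n+1) : ℝ) * cfNum (cfA x) (n+1) + cfNum (cfA x) n := by
      rw [show cfNum (cfA x) (n+2) = cfA x (n+1) * cfNum (cfA x) (n+1) + cfNum (cfA x) n from rfl]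
      push_cast; ring
    have hQ : (cfDen (cfA x) (n+2) : ℝ) = (cfA x (n+1) : ℝ) * cfDen (cfA x) (n+1) + cfDen (cfA x) n := by
      rw [show cfDen (cfA x) (n+2) = cfA x (n+1) * cfDen (cfA x) (n+1) + cfDen (cfA x) n from rfl]
      push_cast; ring
    show x * ((cfDen (cfA x) (n+2) : ℝ) * cfXi x (n+2) + (cfDen (cfA x) (n+1) : ℝ))
      = (cfNum (cfA x) (n+2) : ℝ) * cfXi x (n+2) + (cfNum (cfA x) (n+1) : ℝ)
    rw [hP, hQ]
    rw [hrec] at ih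
    field_simp [hpos.ne'] at ih ⊢
    linear_combination ih

lemma cfConv_tendsto {x : ℝ} (hx : Irrational x) :
    Tendsto (cfConv (cfA x)) atTop (nhds x) := by
  set c := cfA x with hc
  have hc1 : ∀ n, 1 ≤ c (n+1) := fun n => cfA_pos' hx n
  have key : ∀ n, |cfConv c n - x| ≤ ((cfDen c (n+1):ℝ))⁻¹ := by
    intro n
    have hid := cfXi_identity hx n
    rw [← hc] at hid
    have hξ := cfXi_gt_one hx n
    have hQ1 := cfDenR_pos hc1 n
    have hQ1' : (1:ℝ) ≤ (cfDen c (n+1):ℝ) := by exact_mod_cast cfDen_pos hc1 n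
    have hQ0 : (0:ℝ) ≤ (cfDen c n : ℝ) := by
      exact_mod_cast cfDen_nonneg hc1 n
    have hD : (0:ℝ) < (cfDen c (n+1):ℝ) * cfXi x (n+1) + (cfDen c n : ℝ) := by nlinarith
    have hdiff : cfConv c n - x =
        ((cfNum c (n+1) : ℝ) * cfDen c n - (cfNum c n : ℝ) * cfDen c (n+1)) /
          (((cfDen c (n+1):ℝ) * cfXi x (n+1) + (cfDen c n : ℝ)) * (cfDen c (n+1):ℝ)) := by
      rw [cfConv, eq_div_iff (by positivity : ((cfDen c (n+1):ℝ) * cfXi x (n+1) + (cfDen c n : ℝ)) * (cfDen c (n+1):ℝ) ≠ 0)]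
      have e1 : ((cfNum c (n+1):ℝ)/(cfDen c (n+1):ℝ) - x) * (((cfDen c (n+1):ℝ) * cfXi x (n+1) + (cfDen c n : ℝ)) * (cfDen c (n+1):ℝ))
          = (cfNum c (n+1):ℝ) * ((cfDen c (n+1):ℝ) * cfXi x (n+1) + (cfDen c n : ℝ))
            - (x * ((cfDen c (n+1):ℝ) * cfXi x (n+1) + (cfDen c n : ℝ))) * (cfDen c (n+1):ℝ) := by
        field_simp
      rw [e1, hid]
      ring
    have hdet : ((cfNum c (n+1) : ℝ) * cfDen c n - (cfNum c n : ℝ) * cfDen c (n+1)) = (-1)^(n+1) := by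
      exact_mod_cast congrArg (Int.cast : ℤ → ℝ) (cfDet (c := c) n)
    rw [hdiff, hdet, abs_div, abs_pow, abs_neg, abs_one, one_pow,
      abs_of_pos (by positivity)]
    rw [one_div]
    apply inv_anti₀ hQ1
    nlinarith [mul_le_mul hQ1' hξ.le zero_le_one (le_trans zero_le_one hQ1'), mul_pos hD hQ1]
  have h0 : Tendsto (fun n => cfConv c n - x) atTop (nhds 0) := by
    apply squeeze_zero_norm (fun n => key n) (cfDen_inv_tendsto hc1)
  have := h0.add_const x
  simpa using this

lemma cfXi_shift (x : ℝ) (l : ℕ) : ∀ n, cfXi x (l + n) = cfXi (cfXi x l) n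
  | 0 => rfl
  | (n+1) => by
    show cfXi x (l + n + 1) = cfXi (cfXi x l) (n+1)
    rw [show cfXi x (l+n+1) = 1 / Int.fract (cfXi x (l+n)) from rfl,
      cfXi_shift x l n]
    rfl

open Matrix

def mA (t : ℤ) : Matrix (Fin 2) (Fin 2) ℤ := !![t, 1; 1, 0]

lemma mA_symm (t : ℤ) : (mA t)ᵀ = mA t := by
  ext i j
  fin_cases i <;> fin_cases j <;> simp [mA]

lemma cfMat (c : ℕ → ℤ) : ∀ n, ((List.range (n+1)).map (fun i => mA (c i))).prod =
    !![cfNum c (n+1), cfNum c n; cfDen c (n+1), cfDen c n]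
  | 0 => by
    rw [show List.range 1 = [0] from rfl]
    simp only [List.map_cons, List.map_nil, List.prod_cons, List.prod_nil, mul_one]
    rfl
  | (n+1) => by
    rw [List.range_succ, List.map_append, List.prod_append, cfMat c n]
    simp only [List.map_cons, List.map_nil, List.prod_cons, List.prod_nil, mul_one]
    rw [mA, Matrix.mul_fin_two]
    have e1 : cfNum c (n+2) = c (n+1) * cfNum c (n+1) + cfNum c n := rfl
    have e2 : cfDen c (n+2) = c (n+1) * cfDen c (n+1) + cfDen c n := rfl
    rw [show n+1+1 = n+2 from rfl, e1, e2]
    congr 1 <;> ring_nf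

lemma list_reverse_map_range {β : Type*} (l : ℕ) (f : ℕ → β) :
    ((List.range l).map f).reverse = (List.range l).map (fun i => f (l - 1 - i)) := by
  apply List.ext_getElem
  · simp
  · intro i h1 h2
    simp only [List.length_reverse, List.length_map, List.length_range] at h1 h2
    rw [List.getElem_reverse]
    simp only [List.getElem_map, List.getElem_range, List.length_map, List.length_range]

section Periodic
variable (c : ℕ → ℤ) (l : ℕ)

lemma cfMat_period (hl : 1 ≤ l) (hp : ∀ i, c (l + i) = c i) (n : ℕ) :
    cfNum c (l + n + 1) = cfNum c l * cfNum c (n+1) + cfNum c (l-1) * cfDen c (n+1) ∧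
    cfDen c (l + n + 1) = cfDen c l * cfNum c (n+1) + cfDen c (l-1) * cfDen c (n+1) := by
  have key : ((List.range (l + n + 1)).map (fun i => mA (c i))).prod =
      ((List.range l).map (fun i => mA (c i))).prod *
      ((List.range (n+1)).map (fun i => mA (c i))).prod := by
    rw [show l + n + 1 = l + (n+1) from rfl, List.range_add, List.map_append, List.prod_append]
    congr 1
    rw [List.map_map]
    refine congrArg List.prod (List.map_congr_left ?_)
    intro i _
    simp [Function.comp, hp i]
  rw [cfMat, cfMat] at key
  obtain ⟨k, rfl⟩ : ∃ k, l = k + 1 := ⟨l - 1, by omega⟩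
  rw [show k + 1 - 1 = k from rfl] at *
  rw [cfMat, Matrix.mul_fin_two] at key
  have key' := (Matrix.ext_iff (M := _) (N := _)).mpr key
  have e11 := key' 0 0
  have e21 := key' 1 0
  simp only [Matrix.cons_val', Matrix.cons_val_zero, Matrix.cons_val_one, Matrix.head_cons,
    Matrix.empty_val', Matrix.cons_val_fin_one, Matrix.head_fin_const, Matrix.of_apply] at e11 e21
  exact ⟨e11, e21⟩

end Periodic

lemma cfRev (b : ℕ → ℤ) (k : ℕ) (a crev : ℕ → ℤ)
    (ha : ∀ i, i < k+1 → a i = b i) (hc : ∀ i, i < k+1 → crev i = b (k - i)) :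
    cfNum crev (k+1) = cfNum a (k+1) ∧ cfNum crev k = cfDen a (k+1) ∧
    cfDen crev (k+1) = cfNum a k ∧ cfDen crev k = cfDen a k := by
  have h1 : ((List.range (k+1)).map (fun i => mA (crev i))).prod
      = (((List.range (k+1)).map (fun i => mA (a i))).prod)ᵀ := by
    rw [Matrix.transpose_list_prod, List.map_map]
    have e1 : List.map (Matrix.transpose ∘ fun i => mA (a i)) (List.range (k+1))
        = List.map (fun i => mA (a i)) (List.range (k+1)) := by
      refine List.map_congr_left fun i _ => ?_
      simp [Function.comp, mA_symm]
    rw [e1, list_reverse_map_range]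
    refine congrArg List.prod (List.map_congr_left fun i hi => ?_)
    rw [List.mem_range] at hi
    rw [hc i hi, ha (k+1-1-i) (by omega), show k+1-1-i = k-i from rfl]
  rw [cfMat, cfMat] at h1
  have key := (Matrix.ext_iff (M := _) (N := _)).mpr h1
  have e00 := key 0 0
  have e01 := key 0 1
  have e10 := key 1 0
  have e11 := key 1 1
  simp only [Matrix.transpose_apply, Matrix.cons_val', Matrix.cons_val_zero, Matrix.cons_val_one,
    Matrix.head_cons, Matrix.empty_val', Matrix.cons_val_fin_one, Matrix.head_fin_const,
    Matrix.of_apply] at e00 e01 e10 e11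
  exact ⟨e00, e01, e10, e11⟩


/-- Galois: If the quadratic irrational `α` has the purely periodic continued
fraction expansion `[overline{b₁, …, b_l}]`, then its conjugate is
`ᾱ = -1/[overline{b_l, b_{l-1}, …, b₁}]`, the period being reversed. Here `b j` denotes
`b_{j+1}` for `0 ≤ j < l`, so the reversed-period entry at position `m` is `b (l-1-m%l)`. -/
theorem galois_conjugate_reversed_period (l : ℕ) (b : ℕ → ℤ) (hl : 1 ≤ l)
    (hb : ∀ j, j < l → 1 ≤ b j)
    (α α' : ℝ) (qa qh qb : ℤ) (hqa : qa ≠ 0) (hirr : Irrational α)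
    (hroot : (qa : ℝ) * α ^ 2 + (qh : ℝ) * α + (qb : ℝ) = 0)
    (hroot' : (qa : ℝ) * α' ^ 2 + (qh : ℝ) * α' + (qb : ℝ) = 0)
    (hne : α' ≠ α)
    (hexp : ∀ n, cfA α n = b (n % l)) :
    ∃ β : ℝ, Tendsto (cfConv (fun m => b (l - 1 - m % l))) atTop (nhds β) ∧
      α' = -1 / β := by
  obtain ⟨k, rfl⟩ : ∃ k, l = k + 1 := ⟨l - 1, by omega⟩
  set c : ℕ → ℤ := fun m => b (k + 1 - 1 - m % (k+1)) with hcdef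
  have hc0 : ∀ n, 1 ≤ c n := by
    intro n
    exact hb (k + 1 - 1 - n % (k+1)) (by have := Nat.mod_lt n (Nat.succ_pos k); omega)
  have hc1 : ∀ n, 1 ≤ c (n+1) := fun n => hc0 (n+1)
  obtain ⟨β, hβ⟩ := cfConv_exists_lim hc1
  refine ⟨β, hβ, ?_⟩
  -- β ≥ 1
  have hβ1 : (1:ℝ) ≤ β := ge_of_tendsto' hβ (fun n => cfConv_ge_one hc0 n)
  have hβpos : (0:ℝ) < β := lt_of_lt_of_le zero_lt_one hβ1
  -- partial quotients of α are positive
  have ha0 : ∀ n, 1 ≤ cfA α n := by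
    intro n
    rw [hexp n]
    exact hb (n % (k+1)) (Nat.mod_lt _ (Nat.succ_pos k))
  -- ξ_{k+1} = α
  have hshift : cfA (cfXi α (k+1)) = cfA α := by
    funext n
    have e1 : cfA (cfXi α (k+1)) n = cfA α (k+1+n) := by
      rw [cfA, cfA, cfXi_shift α (k+1) n]
    rw [e1, hexp (k+1+n), hexp n, Nat.add_mod_left]
  have hxl : cfXi α (k+1) = α := by
    have t1 := cfConv_tendsto (cfXi_irrational hirr (k+1))
    have t2 := cfConv_tendsto hirr
    rw [hshift] at t1
    exact tendsto_nhds_unique t1 t2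
  -- quadratic satisfied by α
  have hid := cfXi_identity hirr k
  rw [hxl] at hid
  -- reversal identities
  have hrev := cfRev b k (cfA α) c
    (fun i hi => by rw [hexp i, Nat.mod_eq_of_lt hi])
    (fun i hi => by rw [hcdef]; simp only; rw [Nat.mod_eq_of_lt hi]; congr 1)
  obtain ⟨hr1, hr2, hr3, hr4⟩ := hrev
  -- periodicity of c
  have hper : ∀ i, c ((k+1) + i) = c i := by
    intro i
    rw [hcdef]
    simp only
    rw [Nat.add_mod_left]
  -- period recurrence for convergents of c
  have hkey : ∀ n : ℕ, cfConv c ((k+1) + n) * ((cfNum (cfA α) k : ℝ) * cfConv c n + (cfDen (cfA α) k : ℝ))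
      = (cfNum (cfA α) (k+1) : ℝ) * cfConv c n + (cfDen (cfA α) (k+1) : ℝ) := by
    intro n
    obtain ⟨hp1, hp2⟩ := cfMat_period c (k+1) (Nat.le_add_left 1 k) hper n
    simp only [show k+1-1 = k from rfl] at hp1 hp2
    rw [hr1, hr2] at hp1
    rw [hr3, hr4] at hp2
    have hq1 : (0:ℝ) < (cfDen c (n+1) : ℝ) := cfDenR_pos hc1 n
    have hq2 : (0:ℝ) < (cfDen c ((k+1)+n+1) : ℝ) := cfDenR_pos hc1 ((k+1)+n)
    have hp1' : (cfNum c ((k+1)+n+1) : ℝ) = (cfNum (cfA α) (k+1) : ℝ) * (cfNum c (n+1) : ℝ) + (cfDen (cfA α) (k+1) : ℝ) * (cfDen c (n+1) : ℝ) := by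
      exact_mod_cast congrArg (Int.cast : ℤ → ℝ) hp1
    have hp2' : (cfDen c ((k+1)+n+1) : ℝ) = (cfNum (cfA α) k : ℝ) * (cfNum c (n+1) : ℝ) + (cfDen (cfA α) k : ℝ) * (cfDen c (n+1) : ℝ) := by
      exact_mod_cast congrArg (Int.cast : ℤ → ℝ) hp2
    rw [cfConv, cfConv, hp1', hp2']
    have hden : (cfNum (cfA α) k : ℝ) * (cfNum c (n+1):ℝ) + (cfDen (cfA α) k : ℝ) * (cfDen c (n+1):ℝ) ≠ 0 := by
      rw [← hp2']
      exact ne_of_gt hq2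
    rw [div_mul_eq_mul_div, div_eq_iff hden]
    field_simp
  -- pass to the limit
  have hlim1 : Tendsto (fun n => cfConv c ((k+1) + n)) atTop (nhds β) := by
    have := hβ.comp (tendsto_add_atTop_nat (k+1))
    simpa [Function.comp_def, Nat.add_comm] using this
  have hlimL : Tendsto (fun n => cfConv c ((k+1) + n) * ((cfNum (cfA α) k : ℝ) * cfConv c n + (cfDen (cfA α) k : ℝ)))
      atTop (nhds (β * ((cfNum (cfA α) k : ℝ) * β + (cfDen (cfA α) k : ℝ)))) := by
    exact hlim1.mul (((hβ.const_mul _)).add_const _)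
  have hlimR : Tendsto (fun n => (cfNum (cfA α) (k+1) : ℝ) * cfConv c n + (cfDen (cfA α) (k+1) : ℝ))
      atTop (nhds ((cfNum (cfA α) (k+1) : ℝ) * β + (cfDen (cfA α) (k+1) : ℝ))) := by
    exact (hβ.const_mul _).add_const _
  have hbeta : β * ((cfNum (cfA α) k : ℝ) * β + (cfDen (cfA α) k : ℝ))
      = (cfNum (cfA α) (k+1) : ℝ) * β + (cfDen (cfA α) (k+1) : ℝ) := by
    exact tendsto_nhds_unique (hlimL.congr hkey) hlimR
  -- α is positive
  have hα0 : (0:ℝ) < α := by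
    have h1 : (1:ℤ) ≤ ⌊α⌋ := ha0 0
    have h2 : ((⌊α⌋:ℤ):ℝ) ≤ α := Int.floor_le α
    have h3 : (1:ℝ) ≤ ((⌊α⌋:ℤ):ℝ) := by exact_mod_cast h1
    linarith
  have hβne : -1/β ≠ α := by
    have : -1/β < 0 := by
      rw [neg_div]
      simp only [neg_neg, neg_lt, neg_zero]
      positivity
    exact ne_of_lt (lt_trans this hα0)
  have hβ0 : β ≠ 0 := ne_of_gt hβpos
  -- the quadratic from the period
  set A : ℝ := (cfDen (cfA α) (k+1) : ℝ) with hAdef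
  set Bq : ℝ := (cfDen (cfA α) k : ℝ) - (cfNum (cfA α) (k+1) : ℝ) with hBdef
  set Pk : ℝ := (cfNum (cfA α) k : ℝ) with hPkdef
  have hgα : A*α^2 + Bq*α - Pk = 0 := by
    rw [hAdef, hBdef, hPkdef]
    linear_combination hid
  have hgβ : Pk*β^2 + Bq*β - A = 0 := by
    rw [hAdef, hBdef, hPkdef]
    linear_combination hbeta
  have hA1 : (1:ℝ) ≤ A := by
    rw [hAdef]
    exact_mod_cast cfDen_pos (fun n => ha0 (n+1)) k
  -- proportionality of the two quadratics for α
  have hlin : ((cfDen (cfA α) (k+1) * qh - qa * (cfDen (cfA α) k - cfNum (cfA α) (k+1))) : ℤ) • α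
      + (((cfDen (cfA α) (k+1) * qb + qa * cfNum (cfA α) k) : ℤ) : ℝ) = 0 := by
    rw [zsmul_eq_mul]
    push_cast
    rw [hAdef] at hgα
    linear_combination A * hroot - (qa:ℝ) * hgα
  have hzero : ∀ u v : ℤ, (u:ℝ) * α + (v:ℝ) = 0 → u = 0 ∧ v = 0 := by
    intro u v huv
    by_cases hu : u = 0
    · refine ⟨hu, ?_⟩
      rw [hu] at huv
      push_cast at huv
      have hv : (v:ℝ) = 0 := by linarith [huv]
      exact_mod_cast hv
    · exfalso
      apply hirr
      refine ⟨(-v : ℚ)/(u : ℚ), ?_⟩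
      have hu' : (u:ℝ) ≠ 0 := Int.cast_ne_zero.mpr hu
      push_cast
      field_simp
      linarith [huv]
  have hco := hzero _ _ (by rw [← zsmul_eq_mul]; exact hlin)
  have he1 : A * (qh:ℝ) - (qa:ℝ) * Bq = 0 := by
    rw [hAdef, hBdef]
    exact_mod_cast congrArg (Int.cast : ℤ → ℝ) hco.1
  have he2 : A * (qb:ℝ) + (qa:ℝ) * Pk = 0 := by
    rw [hAdef, hPkdef]
    exact_mod_cast congrArg (Int.cast : ℤ → ℝ) hco.2
  -- α' satisfies the period quadratic
  have hgα' : A*α'^2 + Bq*α' - Pk = 0 := by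
    have hq : (qa:ℝ) ≠ 0 := Int.cast_ne_zero.mpr hqa
    have h9 : (qa:ℝ) * (A*α'^2 + Bq*α' - Pk) = 0 := by
      linear_combination A * hroot' - α' * he1 - he2
    rcases mul_eq_zero.mp h9 with h | h
    · exact absurd h hq
    · exact h
  -- -1/β satisfies the period quadratic
  have hgmβ : A*(-1/β)^2 + Bq*(-1/β) - Pk = 0 := by
    have h9 : A*(-1/β)^2 + Bq*(-1/β) - Pk = (-(Pk*β^2 + Bq*β - A))/β^2 := by
      field_simp
      ring
    rw [h9, hgβ]
    simp
  -- factor and conclude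
  have hfac1 : (α' - α) * (A*(α'+α) + Bq) = 0 := by linear_combination hgα' - hgα
  have hfac2 : ((-1/β) - α) * (A*((-1/β)+α) + Bq) = 0 := by linear_combination hgmβ - hgα
  have h1 : A*(α'+α) + Bq = 0 := by
    rcases mul_eq_zero.mp hfac1 with h | h
    · exact absurd (sub_eq_zero.mp h) hne
    · exact h
  have h2 : A*((-1/β)+α) + Bq = 0 := by
    rcases mul_eq_zero.mp hfac2 with h | h
    · exact absurd (sub_eq_zero.mp h) hβne
    · exact h
  have hfin : A * (α' - (-1/β)) = 0 := by linear_combination h1 - h2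
  rcases mul_eq_zero.mp hfin with h | h
  · linarith
  · exact sub_eq_zero.mp h


end
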